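/- Let c⁻, c⁺ > 0. There exists a constant C > 0, depending only on c⁻ and c⁺, with the following property. For every Δx > 0, every x_{j−1} ∈ ℝ with x_j = x_{j−1} + Δx, every α ∈ [x_{j−1}, x_j], every M ≥ 0, and every pair of four times continuously differentiable functions u⁻, u⁺ : ℝ → ℝ satisfying |d⁴u⁻/dx⁴| ≤ M and |d⁴u⁺/dx⁴| ≤ M on [x_{j−1}, x_j] and the interface relations u⁻(α) = u⁺(α), c⁻·u⁻'(α) = c⁺·u⁺'(α), (c⁻)²·u⁻''(α) = (c⁺)²·u⁺''(α), (c⁻)³·u⁻'''(α) = (c⁺)³·u⁺'''(α): if a₀, a₁, a₂, a₃ ∈ ℝ are such that the polynomials h⁻(x) = Σ_{ℓ=0}^{3} (a_ℓ/ℓ!)·((x−α)/(c⁻·Δx))^ℓ and h⁺(x) = Σ_{ℓ=0}^{3} (a_ℓ/ℓ!)·((x−α)/(c⁺·Δx))^ℓ satisfy h⁻(x_{j−1}) = u⁻(x_{j−1}), h⁻'(x_{j−1}) = u⁻'(x_{j−1}), h⁺(x_j) = u⁺(x_j), h⁺'(x_j) = u⁺'(x_j), then for all x ∈ [x_{j−1},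 α]: |u⁻(x) − h⁻(x)| ≤ C·M·(Δx)⁴ and |u⁻'(x) − h⁻'(x)| ≤ C·M·(Δx)³, and for all x ∈ [α, x_j]: |u⁺(x) − h⁺(x)| ≤ C·M·(Δx)⁴ and |u⁺'(x) − h⁺'(x)| ≤ C·M·(Δx)³. -/

import Mathlib

/-- The cubic `x ↦ Σ_{ℓ=0}^{3} (a_ℓ/ℓ!)·((x−α)/s)^ℓ`; with `s = c±·Δx` these are the
two pieces of the immersed interface cubic polynomial. -/
noncomputable def iimCubic (a₀ a₁ a₂ a₃ α s : ℝ) : ℝ → ℝ :=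
  fun x => a₀ + a₁ * ((x - α) / s) + a₂ / 2 * ((x - α) / s)^2 + a₃ / 6 * ((x - α) / s)^3

open Set Nat in
lemma aux_bound_right (g g' : ℝ → ℝ) (hg : ∀ y, HasDerivAt g (g' y) y)
    (a x M : ℝ) (n : ℕ) (hax : a ≤ x) (hga : g a = 0)
    (hb : ∀ y ∈ Set.Icc a x, |g' y| ≤ M * (y - a) ^ n / n !) :
    |g x| ≤ M * (x - a) ^ (n + 1) / (n + 1)! := by
  have hB : ∀ y : ℝ, HasDerivAt (fun y => M * (y - a) ^ (n+1) / (n+1)!)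
      (M * (y - a) ^ n / n !) y := by
    intro y
    have h1 : HasDerivAt (fun y : ℝ => (y - a) ^ (n+1)) (((n:ℝ)+1) * (y - a) ^ n) y := by
      simpa using ((hasDerivAt_id y).sub_const a).fun_pow (n+1)
    have h2 := (h1.const_mul M).div_const ((n+1)! : ℝ)
    refine h2.congr_deriv ?_
    have h3 : (((n+1)! : ℕ) : ℝ) = ((n:ℝ)+1) * (n ! : ℝ) := by
      push_cast [Nat.factorial_succ]; ring
    rw [h3]
    have hn : (n ! : ℝ) ≠ 0 := by exact_mod_cast (Nat.factorial_pos n).ne'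
    field_simp
  have key := image_norm_le_of_norm_deriv_right_le_deriv_boundary
    (f := g) (f' := g') (a := a) (b := x)
    (fun y _ => (hg y).continuousAt.continuousWithinAt)
    (fun y _ => (hg y).hasDerivWithinAt)
    (by simp [hga])
    hB
    (fun y hy => by
      rw [Real.norm_eq_abs]
      exact hb y ⟨hy.1, hy.2.le⟩)
  simpa [Real.norm_eq_abs] using key ⟨hax, le_refl x⟩

open Set Nat in
lemma aux_bound_two (g g' : ℝ → ℝ) (hg : ∀ y, HasDerivAt g (g' y) y)
    (a x M : ℝ) (n : ℕ) (hga : g a = 0)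
    (hb : ∀ y ∈ Set.uIcc a x, |g' y| ≤ M * |y - a| ^ n / n !) :
    |g x| ≤ M * |x - a| ^ (n + 1) / (n + 1)! := by
  rcases le_total a x with hax | hxa
  · have key := aux_bound_right g g' hg a x M n hax hga (fun y hy => by
      have hy' : y ∈ Set.uIcc a x := by rw [Set.uIcc_of_le hax]; exact hy
      have h2 := hb y hy'
      rwa [abs_of_nonneg (by linarith [hy.1] : (0:ℝ) ≤ y - a)] at h2)
    rwa [abs_of_nonneg (by linarith : (0:ℝ) ≤ x - a)]
  · have hG' : ∀ y, HasDerivAt (fun y => g (2*a - y)) (-(g' (2*a - y))) y := by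
      intro y
      have hi : HasDerivAt (fun y : ℝ => 2*a - y) (-1) y := by
        simpa using (hasDerivAt_const y (2*a)).fun_sub (hasDerivAt_id y)
      simpa [Function.comp_def] using (hg (2*a - y)).comp y hi
    have hGa : g (2*a - a) = 0 := by rw [show 2*a - a = a by ring]; exact hga
    have hax' : a ≤ 2*a - x := by linarith
    have hbb : ∀ y ∈ Set.Icc a (2*a - x), |(-(g' (2*a - y)))| ≤ M * (y - a) ^ n / n ! := by
      intro y hy
      have hmem : 2*a - y ∈ Set.uIcc a x := by
        rw [Set.uIcc_of_ge hxa]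
        refine ⟨by linarith [hy.2], by linarith [hy.1]⟩
      have h2 := hb (2*a - y) hmem
      rw [abs_neg]
      calc |g' (2*a - y)| ≤ M * |2*a - y - a| ^ n / n ! := h2
        _ = M * (y - a) ^ n / n ! := by
            rw [show (2*a - y - a) = -(y - a) by ring, abs_neg,
              abs_of_nonneg (by linarith [hy.1] : (0:ℝ) ≤ y - a)]
    have key := aux_bound_right (fun y => g (2*a - y)) (fun y => -(g' (2*a - y))) hG'
      a (2*a - x) M n hax' hGa hbb
    rw [show 2*a - (2*a - x) = x by ring] at key
    calc |g x| ≤ M * (2*a - x - a) ^ (n+1) / (n+1)! := key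
      _ = M * |x - a| ^ (n+1) / (n+1)! := by
          rw [show (2*a - x - a) = -(x - a) by ring,
            abs_of_nonpos (by linarith : x - a ≤ 0)]

open Nat in
lemma aux_taylor : ∀ (n : ℕ) (f : ℝ → ℝ), ContDiff ℝ n f → ∀ a x M : ℝ,
    (∀ y ∈ Set.uIcc a x, |iteratedDeriv n f y| ≤ M) →
    |f x - ∑ ℓ ∈ Finset.range n, iteratedDeriv ℓ f a * (x - a)^ℓ / ℓ !| ≤ M * |x - a|^n / n ! := by
  intro n
  induction n with
  | zero =>
      intro f _ a x M hb
      simpa using hb x Set.right_mem_uIcc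
  | succ n ih =>
      intro f hf a x M hb
      have hf' : ContDiff ℝ (n + 1 : ℕ) f := hf
      have hdf : ContDiff ℝ n (deriv f) := by
        have hcast : ((n+1 : ℕ) : WithTop ℕ∞) = (n : WithTop ℕ∞) + 1 := by push_cast; ring
        have hf2 : ContDiff ℝ ((n : WithTop ℕ∞) + 1) f := by rw [← hcast]; exact hf'
        exact (contDiff_succ_iff_deriv.mp hf2).2.2
      have hfd : Differentiable ℝ f := hf.differentiable (by simp)
      -- the remainder function and its derivative
      set g : ℝ → ℝ := fun y => f y - ∑ ℓ ∈ Finset.range (n+1), iteratedDeriv ℓ f a * (y - a)^ℓ / ℓ ! with hgdef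
      set g' : ℝ → ℝ := fun y => deriv f y - ∑ ℓ ∈ Finset.range n, iteratedDeriv ℓ (deriv f) a * (y - a)^ℓ / ℓ ! with hg'def
      have hg : ∀ y, HasDerivAt g (g' y) y := by
        intro y
        have hsum : HasDerivAt (fun y => ∑ ℓ ∈ Finset.range (n+1), iteratedDeriv ℓ f a * (y - a)^ℓ / ℓ !)
            (∑ ℓ ∈ Finset.range (n+1), iteratedDeriv ℓ f a * ((ℓ:ℝ) * (y - a)^(ℓ-1)) / ℓ !) y := by
          apply HasDerivAt.fun_sum
          intro ℓ _
          simpa using ((((hasDerivAt_id y).sub_const a).fun_pow ℓ).const_mul (iteratedDeriv ℓ f a)).div_const (ℓ ! : ℝ)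
        have heq : (∑ ℓ ∈ Finset.range (n+1), iteratedDeriv ℓ f a * ((ℓ:ℝ) * (y - a)^(ℓ-1)) / ℓ !)
            = ∑ ℓ ∈ Finset.range n, iteratedDeriv ℓ (deriv f) a * (y - a)^ℓ / ℓ ! := by
          rw [Finset.sum_range_succ']
          simp only [Nat.cast_zero, zero_mul, mul_zero, zero_div, add_zero]
          apply Finset.sum_congr rfl
          intro ℓ _
          rw [← iteratedDeriv_succ']
          have hfac : ((ℓ+1)! : ℝ) = ((ℓ:ℝ)+1) * (ℓ ! : ℝ) := by push_cast [Nat.factorial_succ]; ring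
          rw [hfac]
          have h1 : ((ℓ:ℝ) + 1) ≠ 0 := by positivity
          have h2 : (ℓ ! : ℝ) ≠ 0 := by exact_mod_cast (Nat.factorial_pos ℓ).ne'
          push_cast
          field_simp
        rw [hg'def]
        simpa [heq] using ((hfd y).hasDerivAt.fun_sub hsum)
      have hga : g a = 0 := by
        rw [hgdef]
        simp only [Finset.sum_range_succ']
        simp [sub_self]
      have hbound : ∀ y ∈ Set.uIcc a x, |g' y| ≤ M * |y - a| ^ n / n ! := by
        intro y hy
        have hsub : Set.uIcc a y ⊆ Set.uIcc a x :=
          Set.uIcc_subset_uIcc Set.left_mem_uIcc hy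
        have := ih (deriv f) hdf a y M (fun z hz => by
          have h4 : iteratedDeriv n (deriv f) z = iteratedDeriv (n+1) f z := by
            rw [iteratedDeriv_succ']
          rw [h4]
          exact hb z (hsub hz))
        exact this
      have := aux_bound_two g g' hg a x M n hga hbound
      exact this

lemma iimCubic_hasDerivAt (a₀ a₁ a₂ a₃ α s x : ℝ) :
    HasDerivAt (iimCubic a₀ a₁ a₂ a₃ α s)
      ((a₁ + a₂ * ((x - α) / s) + a₃ / 2 * ((x - α) / s)^2) / s) x := by
  have h1 : HasDerivAt (fun x : ℝ => (x - α) / s) (1 / s) x := by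
    simpa using ((hasDerivAt_id x).sub_const α).div_const s
  have h2 := (h1.pow 2).const_mul (a₂ / 2)
  have h3 := (h1.pow 3).const_mul (a₃ / 6)
  have h4 := h1.const_mul a₁
  have := (((hasDerivAt_const x a₀).add h4).add h2).add h3
  refine this.congr_deriv ?_
  ring

lemma iimCubic_deriv (a₀ a₁ a₂ a₃ α s x : ℝ) :
    deriv (iimCubic a₀ a₁ a₂ a₃ α s) x
      = (a₁ + a₂ * ((x - α) / s) + a₃ / 2 * ((x - α) / s)^2) / s :=
  (iimCubic_hasDerivAt a₀ a₁ a₂ a₃ α s x).deriv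

lemma abs_mul_le' {x y A B : ℝ} (hx : |x| ≤ A) (hy : |y| ≤ B) : |x * y| ≤ A * B := by
  rw [abs_mul]
  exact mul_le_mul hx hy (abs_nonneg y) ((abs_nonneg x).trans hx)

set_option maxHeartbeats 2000000 in
lemma hermite_bound (δ K : ℝ) (hδ : 0 < δ) (hK : 0 < K) :
    ∃ C₀ : ℝ, 0 < C₀ ∧ ∀ b₀ b₁ b₂ b₃ t₁ t₂ D : ℝ,
      δ ≤ t₂ - t₁ → |t₁| ≤ K → |t₂| ≤ K →
      |b₀ + b₁*t₁ + b₂/2*t₁^2 + b₃/6*t₁^3| ≤ D →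
      |b₁ + b₂*t₁ + b₃/2*t₁^2| ≤ D →
      |b₀ + b₁*t₂ + b₂/2*t₂^2 + b₃/6*t₂^3| ≤ D →
      |b₁ + b₂*t₂ + b₃/2*t₂^2| ≤ D →
      ∀ t, |t| ≤ K →
        |b₀ + b₁*t + b₂/2*t^2 + b₃/6*t^3| ≤ C₀ * D ∧ |b₁ + b₂*t + b₃/2*t^2| ≤ C₀ * D := by
  set B3 : ℝ := (48*K + 24)/δ^3 with hB3def
  set B2 : ℝ := (2 + B3*K^2)/δ with hB2def
  set B1 : ℝ := 1 + B2*K + B3*K^2/2 with hB1def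
  set B0 : ℝ := 1 + B1*K + B2*K^2/2 + B3*K^3/6 with hB0def
  have hB3 : 0 < B3 := by positivity
  have hB2 : 0 < B2 := by positivity
  have hB1 : 0 < B1 := by positivity
  have hB0 : 0 < B0 := by positivity
  clear_value B3 B2 B1 B0
  refine ⟨B0 + B1*(K+1) + B2*(K^2+K) + B3*(K^3+K^2), by positivity, ?_⟩
  intro b₀ b₁ b₂ b₃ t₁ t₂ D hgap ht1 ht2 hP hP' hQ hQ'
  have hD : 0 ≤ D := (abs_nonneg _).trans hP
  have hh : 0 < t₂ - t₁ := lt_of_lt_of_le hδ hgap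
  have hh2K : t₂ - t₁ ≤ 2*K := by
    have := abs_le.mp ht1; have := abs_le.mp ht2; linarith
  -- bound b₃
  have key3 : b₃ * (t₂ - t₁)^3
      = 6*(((b₁ + b₂*t₁ + b₃/2*t₁^2) + (b₁ + b₂*t₂ + b₃/2*t₂^2))*(t₂ - t₁)
        - 2*((b₀ + b₁*t₂ + b₂/2*t₂^2 + b₃/6*t₂^3) - (b₀ + b₁*t₁ + b₂/2*t₁^2 + b₃/6*t₁^3))) := by
    ring
  have habs3 : |b₃ * (t₂ - t₁)^3| ≤ 24*D*K + 24*D := by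
    rw [key3]
    have h1 := abs_le.mp hP
    have h2 := abs_le.mp hP'
    have h3 := abs_le.mp hQ
    have h4 := abs_le.mp hQ'
    have m1 : ((b₁ + b₂*t₁ + b₃/2*t₁^2) + (b₁ + b₂*t₂ + b₃/2*t₂^2)) * (t₂ - t₁) ≤ (2*D) * (t₂ - t₁) :=
      mul_le_mul_of_nonneg_right (by linarith) hh.le
    have m1' : (-(2*D)) * (t₂ - t₁) ≤ ((b₁ + b₂*t₁ + b₃/2*t₁^2) + (b₁ + b₂*t₂ + b₃/2*t₂^2)) * (t₂ - t₁) :=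
      mul_le_mul_of_nonneg_right (by linarith) hh.le
    have m2 : (2*D) * (t₂ - t₁) ≤ (2*D) * (2*K) :=
      mul_le_mul_of_nonneg_left hh2K (by linarith)
    have m2' : (-(2*D)) * (2*K) ≤ (-(2*D)) * (t₂ - t₁) := by nlinarith
    rw [abs_le]
    constructor
    · linarith
    · linarith
  have hb3 : |b₃| ≤ B3 * D := by
    have step : |b₃| * δ^3 ≤ 24*D*K + 24*D := by
      calc |b₃| * δ^3 ≤ |b₃| * (t₂ - t₁)^3 := by
            have : δ^3 ≤ (t₂-t₁)^3 := pow_le_pow_left₀ hδ.le hgap 3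
            exact mul_le_mul_of_nonneg_left this (abs_nonneg b₃)
        _ = |b₃ * (t₂ - t₁)^3| := by
            rw [abs_mul, abs_of_nonneg (by positivity : (0:ℝ) ≤ (t₂-t₁)^3)]
        _ ≤ 24*D*K + 24*D := habs3
    rw [hB3def]
    rw [div_mul_eq_mul_div, le_div_iff₀ (by positivity : (0:ℝ) < δ^3)]
    have : 0 ≤ D * K := mul_nonneg hD hK.le
    linarith
  -- bound b₂
  have key2 : b₂ * (t₂ - t₁)
      = ((b₁ + b₂*t₂ + b₃/2*t₂^2) - (b₁ + b₂*t₁ + b₃/2*t₁^2)) - b₃/2*(t₂^2 - t₁^2) := by ring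
  have hb2 : |b₂| ≤ B2 * D := by
    have ht1sq : |t₁^2| ≤ K^2 := by rw [abs_pow]; exact pow_le_pow_left₀ (abs_nonneg _) ht1 2
    have ht2sq : |t₂^2| ≤ K^2 := by rw [abs_pow]; exact pow_le_pow_left₀ (abs_nonneg _) ht2 2
    have habs2 : |b₂ * (t₂ - t₁)| ≤ 2*D + B3*D*K^2 := by
      rw [key2]
      calc |_ - b₃/2*(t₂^2 - t₁^2)|
          ≤ |(b₁ + b₂*t₂ + b₃/2*t₂^2) - (b₁ + b₂*t₁ + b₃/2*t₁^2)| + |b₃/2*(t₂^2 - t₁^2)| :=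
            abs_sub _ _
        _ ≤ 2*D + B3*D*K^2 := by
            have e1 : |(b₁ + b₂*t₂ + b₃/2*t₂^2) - (b₁ + b₂*t₁ + b₃/2*t₁^2)| ≤ 2*D := by
              calc _ ≤ |b₁ + b₂*t₂ + b₃/2*t₂^2| + |b₁ + b₂*t₁ + b₃/2*t₁^2| := abs_sub _ _
                _ ≤ 2*D := by linarith
            have e2 : |b₃/2*(t₂^2 - t₁^2)| ≤ (B3*D/2)*(2*K^2) := by
              apply abs_mul_le'
              · rw [abs_div]; simp only [abs_two]; linarith [hb3]
              · calc |t₂^2 - t₁^2| ≤ |t₂^2| + |t₁^2| := abs_sub _ _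
                  _ ≤ 2*K^2 := by linarith
            linarith
    have step : |b₂| * δ ≤ 2*D + B3*D*K^2 := by
      calc |b₂| * δ ≤ |b₂| * (t₂ - t₁) := mul_le_mul_of_nonneg_left hgap (abs_nonneg b₂)
        _ = |b₂ * (t₂ - t₁)| := by rw [abs_mul, abs_of_nonneg hh.le]
        _ ≤ _ := habs2
    rw [hB2def, div_mul_eq_mul_div, le_div_iff₀ hδ]
    linarith
  -- bound b₁
  have hb1 : |b₁| ≤ B1 * D := by
    have key1 : b₁ = (b₁ + b₂*t₁ + b₃/2*t₁^2) - b₂*t₁ - b₃/2*t₁^2 := by ring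
    have ht1sq : |t₁^2| ≤ K^2 := by rw [abs_pow]; exact pow_le_pow_left₀ (abs_nonneg _) ht1 2
    have e1 : |b₂*t₁| ≤ (B2*D)*K := abs_mul_le' hb2 ht1
    have e2 : |b₃/2*t₁^2| ≤ (B3*D/2)*K^2 := by
      apply abs_mul_le' _ ht1sq
      rw [abs_div]; simp only [abs_two]; linarith [hb3]
    calc |b₁| = |(b₁ + b₂*t₁ + b₃/2*t₁^2) - b₂*t₁ - b₃/2*t₁^2| := by rw [← key1]
      _ ≤ |(b₁ + b₂*t₁ + b₃/2*t₁^2) - b₂*t₁| + |b₃/2*t₁^2| := abs_sub _ _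
      _ ≤ |b₁ + b₂*t₁ + b₃/2*t₁^2| + |b₂*t₁| + |b₃/2*t₁^2| := by linarith [abs_sub (b₁ + b₂*t₁ + b₃/2*t₁^2) (b₂*t₁)]
      _ ≤ B1 * D := by rw [hB1def]; ring_nf; ring_nf at hP' e1 e2 ⊢; linarith
  -- bound b₀
  have hb0 : |b₀| ≤ B0 * D := by
    have key0 : b₀ = (b₀ + b₁*t₁ + b₂/2*t₁^2 + b₃/6*t₁^3) - b₁*t₁ - b₂/2*t₁^2 - b₃/6*t₁^3 := by ring
    have ht1sq : |t₁^2| ≤ K^2 := by rw [abs_pow]; exact pow_le_pow_left₀ (abs_nonneg _) ht1 2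
    have ht1cb : |t₁^3| ≤ K^3 := by rw [abs_pow]; exact pow_le_pow_left₀ (abs_nonneg _) ht1 3
    have e1 : |b₁*t₁| ≤ (B1*D)*K := abs_mul_le' hb1 ht1
    have e2 : |b₂/2*t₁^2| ≤ (B2*D/2)*K^2 := by
      apply abs_mul_le' _ ht1sq
      rw [abs_div]; simp only [abs_two]; linarith [hb2]
    have e3 : |b₃/6*t₁^3| ≤ (B3*D/6)*K^3 := by
      apply abs_mul_le' _ ht1cb
      rw [abs_div]
      have : |(6:ℝ)| = 6 := by norm_num
      rw [this]; linarith [hb3]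
    calc |b₀| = |(b₀ + b₁*t₁ + b₂/2*t₁^2 + b₃/6*t₁^3) - b₁*t₁ - b₂/2*t₁^2 - b₃/6*t₁^3| := by rw [← key0]
      _ ≤ |(b₀ + b₁*t₁ + b₂/2*t₁^2 + b₃/6*t₁^3) - b₁*t₁ - b₂/2*t₁^2| + |b₃/6*t₁^3| := abs_sub _ _
      _ ≤ |(b₀ + b₁*t₁ + b₂/2*t₁^2 + b₃/6*t₁^3) - b₁*t₁| + |b₂/2*t₁^2| + |b₃/6*t₁^3| := by
          linarith [abs_sub ((b₀ + b₁*t₁ + b₂/2*t₁^2 + b₃/6*t₁^3) - b₁*t₁) (b₂/2*t₁^2)]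
      _ ≤ |b₀ + b₁*t₁ + b₂/2*t₁^2 + b₃/6*t₁^3| + |b₁*t₁| + |b₂/2*t₁^2| + |b₃/6*t₁^3| := by
          linarith [abs_sub (b₀ + b₁*t₁ + b₂/2*t₁^2 + b₃/6*t₁^3) (b₁*t₁)]
      _ ≤ B0 * D := by rw [hB0def]; ring_nf; ring_nf at hP e1 e2 e3 ⊢; linarith
  -- conclude
  intro t ht
  have htsq : |t^2| ≤ K^2 := by rw [abs_pow]; exact pow_le_pow_left₀ (abs_nonneg _) ht 2
  have htcb : |t^3| ≤ K^3 := by rw [abs_pow]; exact pow_le_pow_left₀ (abs_nonneg _) ht 3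
  have e1 : |b₁*t| ≤ (B1*D)*K := abs_mul_le' hb1 ht
  have e2 : |b₂/2*t^2| ≤ (B2*D/2)*K^2 := by
    apply abs_mul_le' _ htsq
    rw [abs_div]; simp only [abs_two]; linarith [hb2]
  have e2' : |b₂*t| ≤ (B2*D)*K := abs_mul_le' hb2 ht
  have e3 : |b₃/6*t^3| ≤ (B3*D/6)*K^3 := by
    apply abs_mul_le' _ htcb
    rw [abs_div]
    have : |(6:ℝ)| = 6 := by norm_num
    rw [this]; linarith [hb3]
  have e3' : |b₃/2*t^2| ≤ (B3*D/2)*K^2 := by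
    apply abs_mul_le' _ htsq
    rw [abs_div]; simp only [abs_two]; linarith [hb3]
  constructor
  · calc |b₀ + b₁*t + b₂/2*t^2 + b₃/6*t^3|
        ≤ |b₀ + b₁*t + b₂/2*t^2| + |b₃/6*t^3| := abs_add_le _ _
      _ ≤ |b₀ + b₁*t| + |b₂/2*t^2| + |b₃/6*t^3| := by linarith [abs_add_le (b₀ + b₁*t) (b₂/2*t^2)]
      _ ≤ |b₀| + |b₁*t| + |b₂/2*t^2| + |b₃/6*t^3| := by linarith [abs_add_le b₀ (b₁*t)]
      _ ≤ (B0 + B1*(K+1) + B2*(K^2+K) + B3*(K^3+K^2)) * D := by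
          have n1 : 0 ≤ B1*D := mul_nonneg hB1.le hD
          have n2 : 0 ≤ B2*D*K := mul_nonneg (mul_nonneg hB2.le hD) hK.le
          have n2' : 0 ≤ B2*D*K^2 := mul_nonneg (mul_nonneg hB2.le hD) (sq_nonneg K)
          have n3 : 0 ≤ B3*D*K^2 := mul_nonneg (mul_nonneg hB3.le hD) (sq_nonneg K)
          have n3' : 0 ≤ B3*D*K^3 := mul_nonneg (mul_nonneg hB3.le hD) (pow_nonneg hK.le 3)
          ring_nf; ring_nf at hb0 e1 e2 e3 n1 n2 n2' n3 n3' ⊢; linarith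
  · calc |b₁ + b₂*t + b₃/2*t^2|
        ≤ |b₁ + b₂*t| + |b₃/2*t^2| := abs_add_le _ _
      _ ≤ |b₁| + |b₂*t| + |b₃/2*t^2| := by linarith [abs_add_le b₁ (b₂*t)]
      _ ≤ (B0 + B1*(K+1) + B2*(K^2+K) + B3*(K^3+K^2)) * D := by
          have n0 : 0 ≤ B0*D := mul_nonneg hB0.le hD
          have n1 : 0 ≤ B1*D*K := mul_nonneg (mul_nonneg hB1.le hD) hK.le
          have n2 : 0 ≤ B2*D*K^2 := mul_nonneg (mul_nonneg hB2.le hD) (sq_nonneg K)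
          have n3 : 0 ≤ B3*D*K^3 := mul_nonneg (mul_nonneg hB3.le hD) (pow_nonneg hK.le 3)
          have n3' : 0 ≤ B3*D*K^2 := mul_nonneg (mul_nonneg hB3.le hD) (sq_nonneg K)
          ring_nf; ring_nf at hb1 e2' e3' n0 n1 n2 n3 n3' ⊢; linarith

set_option maxHeartbeats 2000000 in
/-- **Accuracy of the immersed interface cubic polynomial.**
There is a constant `C > 0` depending only on `c⁻, c⁺ > 0` such that: for any cell
`[x_{j−1}, x_j]` of width `Δx` containing the interface `α`, any `C⁴` functions
`u⁻, u⁺` with fourth derivatives bounded by `M` on the cell satisfying the interface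
relations `[u] = [c u_x] = [c² u_xx] = [c³ u_xxx] = 0` at `α`, and any coefficients
`a₀,…,a₃` such that the piecewise cubic `h⁻(x) = Σ (a_ℓ/ℓ!)((x−α)/(c⁻Δx))^ℓ`,
`h⁺(x) = Σ (a_ℓ/ℓ!)((x−α)/(c⁺Δx))^ℓ` interpolates `u⁻, u⁻'` at `x_{j−1}` and
`u⁺, u⁺'` at `x_j`, one has `|u± − h±| ≤ C M Δx⁴` and `|u±' − h±'| ≤ C M Δx³` on the
respective subintervals. -/
theorem stmt_15 (cm cp : ℝ) (hcm : 0 < cm) (hcp : 0 < cp) :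
    ∃ C : ℝ, 0 < C ∧
      ∀ (Δx xjm xj α M : ℝ), 0 < Δx → xj = xjm + Δx → α ∈ Set.Icc xjm xj → 0 ≤ M →
      ∀ um up : ℝ → ℝ, ContDiff ℝ 4 um → ContDiff ℝ 4 up →
      (∀ x ∈ Set.Icc xjm xj, |iteratedDeriv 4 um x| ≤ M) →
      (∀ x ∈ Set.Icc xjm xj, |iteratedDeriv 4 up x| ≤ M) →
      um α = up α →
      cm * deriv um α = cp * deriv up α →
      cm^2 * iteratedDeriv 2 um α = cp^2 * iteratedDeriv 2 up α →
      cm^3 * iteratedDeriv 3 um α = cp^3 * iteratedDeriv 3 up α →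
      ∀ a₀ a₁ a₂ a₃ : ℝ,
      iimCubic a₀ a₁ a₂ a₃ α (cm * Δx) xjm = um xjm →
      deriv (iimCubic a₀ a₁ a₂ a₃ α (cm * Δx)) xjm = deriv um xjm →
      iimCubic a₀ a₁ a₂ a₃ α (cp * Δx) xj = up xj →
      deriv (iimCubic a₀ a₁ a₂ a₃ α (cp * Δx)) xj = deriv up xj →
      (∀ x ∈ Set.Icc xjm α,
        |um x - iimCubic a₀ a₁ a₂ a₃ α (cm * Δx) x| ≤ C * M * Δx^4 ∧
        |deriv um x - deriv (iimCubic a₀ a₁ a₂ a₃ α (cm * Δx)) x| ≤ C * M * Δx^3) ∧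
      (∀ x ∈ Set.Icc α xj,
        |up x - iimCubic a₀ a₁ a₂ a₃ α (cp * Δx) x| ≤ C * M * Δx^4 ∧
        |deriv up x - deriv (iimCubic a₀ a₁ a₂ a₃ α (cp * Δx)) x| ≤ C * M * Δx^3) := by
  have hδ : (0:ℝ) < min cm⁻¹ cp⁻¹ := by positivity
  have hK : (0:ℝ) < max cm⁻¹ cp⁻¹ := by positivity
  obtain ⟨C₀, hC₀, HH⟩ := hermite_bound (min cm⁻¹ cp⁻¹) (max cm⁻¹ cp⁻¹) hδ hK
  set K := max cm⁻¹ cp⁻¹ with hKdef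
  set δ := min cm⁻¹ cp⁻¹ with hδdef
  refine ⟨1 + C₀*(1+cm+cp)*(1+cm⁻¹+cp⁻¹), by positivity, ?_⟩
  intro Δx xjm xj α M hΔx hxj hα hM um up hum hup hbm hbp j0 j1 j2 j3 a₀ a₁ a₂ a₃ i1 i2 i3 i4
  subst hxj
  obtain ⟨hα1, hα2⟩ := hα
  have hsm : (0:ℝ) < cm*Δx := by positivity
  have hsp : (0:ℝ) < cp*Δx := by positivity
  have hX4 : (0:ℝ) ≤ M*Δx^4 := by positivity
  have hX3 : (0:ℝ) ≤ M*Δx^3 := by positivity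
  have q1 : (0:ℝ) ≤ cm*(M*Δx^4) := by positivity
  have q2 : (0:ℝ) ≤ cp*(M*Δx^4) := by positivity
  -- signatures of Taylor estimates
  have hmem : ∀ x, xjm ≤ x → x ≤ xjm + Δx → Set.uIcc α x ⊆ Set.Icc xjm (xjm + Δx) := by
    intro x hx1 hx2
    rw [show Set.Icc xjm (xjm + Δx) = Set.uIcc xjm (xjm + Δx) by
      rw [Set.uIcc_of_le (by linarith)]]
    exact Set.uIcc_subset_uIcc (by rw [Set.uIcc_of_le (by linarith)]; exact ⟨hα1, hα2⟩)
      (by rw [Set.uIcc_of_le (by linarith)]; exact ⟨hx1, hx2⟩)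
  have hum' : ContDiff ℝ (4:ℕ) um := by exact_mod_cast hum
  have hup' : ContDiff ℝ (4:ℕ) up := by exact_mod_cast hup
  have hdum : ContDiff ℝ (3:ℕ) (deriv um) := by
    have hcast : ((4 : ℕ) : WithTop ℕ∞) = ((3:ℕ) : WithTop ℕ∞) + 1 := by norm_cast
    have hf2 : ContDiff ℝ (((3:ℕ) : WithTop ℕ∞) + 1) um := by rw [← hcast]; exact hum'
    exact (contDiff_succ_iff_deriv.mp hf2).2.2
  have hdup : ContDiff ℝ (3:ℕ) (deriv up) := by
    have hcast : ((4 : ℕ) : WithTop ℕ∞) = ((3:ℕ) : WithTop ℕ∞) + 1 := by norm_cast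
    have hf2 : ContDiff ℝ (((3:ℕ) : WithTop ℕ∞) + 1) up := by rw [← hcast]; exact hup'
    exact (contDiff_succ_iff_deriv.mp hf2).2.2
  have hsucc3 : ∀ f : ℝ → ℝ, iteratedDeriv 3 (deriv f) = iteratedDeriv 4 f := by
    intro f; rw [show (4:ℕ) = 3 + 1 from rfl]; rw [← iteratedDeriv_succ']
  have hsucc2 : ∀ f : ℝ → ℝ, iteratedDeriv 1 (deriv f) = iteratedDeriv 2 f := by
    intro f; rw [show (2:ℕ) = 1 + 1 from rfl]; rw [← iteratedDeriv_succ']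
  have hsucc2' : ∀ f : ℝ → ℝ, iteratedDeriv 2 (deriv f) = iteratedDeriv 3 f := by
    intro f; rw [show (3:ℕ) = 2 + 1 from rfl]; rw [← iteratedDeriv_succ']
  -- Taylor estimates
  have tay4 : ∀ (f : ℝ → ℝ), ContDiff ℝ (4:ℕ) f →
      (∀ y ∈ Set.Icc xjm (xjm + Δx), |iteratedDeriv 4 f y| ≤ M) →
      ∀ x, xjm ≤ x → x ≤ xjm + Δx →
      |f x - (f α + deriv f α*(x-α) + iteratedDeriv 2 f α*(x-α)^2/2
        + iteratedDeriv 3 f α*(x-α)^3/6)| ≤ M*|x-α|^4/24 := by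
    intro f hf hbd x hx1 hx2
    have := aux_taylor 4 f hf α x M (fun y hy => hbd y (hmem x hx1 hx2 hy))
    have hsum : (∑ ℓ ∈ Finset.range 4, iteratedDeriv ℓ f α * (x - α)^ℓ / (Nat.factorial ℓ : ℝ))
        = f α + deriv f α*(x-α) + iteratedDeriv 2 f α*(x-α)^2/2 + iteratedDeriv 3 f α*(x-α)^3/6 := by
      rw [Finset.sum_range_succ, Finset.sum_range_succ, Finset.sum_range_succ,
        Finset.sum_range_succ, Finset.sum_range_zero]
      norm_num [Nat.factorial, iteratedDeriv_zero, iteratedDeriv_one]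
    rw [hsum] at this
    convert this using 2 <;> norm_num [Nat.factorial]
  have tay3 : ∀ (f : ℝ → ℝ), ContDiff ℝ (3:ℕ) (deriv f) →
      (∀ y ∈ Set.Icc xjm (xjm + Δx), |iteratedDeriv 4 f y| ≤ M) →
      ∀ x, xjm ≤ x → x ≤ xjm + Δx →
      |deriv f x - (deriv f α + iteratedDeriv 2 f α*(x-α) + iteratedDeriv 3 f α*(x-α)^2/2)|
        ≤ M*|x-α|^3/6 := by
    intro f hf hbd x hx1 hx2
    have := aux_taylor 3 (deriv f) hf α x M (fun y hy => by
      rw [hsucc3 f]; exact hbd y (hmem x hx1 hx2 hy))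
    have hsum : (∑ ℓ ∈ Finset.range 3, iteratedDeriv ℓ (deriv f) α * (x - α)^ℓ / (Nat.factorial ℓ : ℝ))
        = deriv f α + iteratedDeriv 2 f α*(x-α) + iteratedDeriv 3 f α*(x-α)^2/2 := by
      rw [Finset.sum_range_succ, Finset.sum_range_succ, Finset.sum_range_succ, Finset.sum_range_zero]
      rw [hsucc2 f, hsucc2' f]
      norm_num [Nat.factorial, iteratedDeriv_zero, iteratedDeriv_one]
    rw [hsum] at this
    convert this using 2 <;> norm_num [Nat.factorial]
  -- the coefficients
  set b0 : ℝ := um α - a₀ with hb0def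
  set b1 : ℝ := cm*Δx*(deriv um α) - a₁ with hb1def
  set b2 : ℝ := (cm*Δx)^2*(iteratedDeriv 2 um α) - a₂ with hb2def
  set b3 : ℝ := (cm*Δx)^3*(iteratedDeriv 3 um α) - a₃ with hb3def
  have hb0p : b0 = up α - a₀ := by rw [hb0def, j0]
  have hb1p : b1 = cp*Δx*(deriv up α) - a₁ := by rw [hb1def]; linear_combination Δx * j1
  have hb2p : b2 = (cp*Δx)^2*(iteratedDeriv 2 up α) - a₂ := by
    rw [hb2def]; linear_combination Δx^2 * j2
  have hb3p : b3 = (cp*Δx)^3*(iteratedDeriv 3 up α) - a₃ := by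
    rw [hb3def]; linear_combination Δx^3 * j3
  -- identities
  have idM : ∀ x : ℝ, (um α + deriv um α*(x-α) + iteratedDeriv 2 um α*(x-α)^2/2
        + iteratedDeriv 3 um α*(x-α)^3/6) - iimCubic a₀ a₁ a₂ a₃ α (cm*Δx) x
      = b0 + b1*((x-α)/(cm*Δx)) + b2/2*((x-α)/(cm*Δx))^2 + b3/6*((x-α)/(cm*Δx))^3 := by
    intro x
    rw [hb0def, hb1def, hb2def, hb3def]
    simp only [iimCubic]
    field_simp
    ring
  have idM' : ∀ x : ℝ, (deriv um α + iteratedDeriv 2 um α*(x-α) + iteratedDeriv 3 um α*(x-α)^2/2)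
        - deriv (iimCubic a₀ a₁ a₂ a₃ α (cm*Δx)) x
      = (b1 + b2*((x-α)/(cm*Δx)) + b3/2*((x-α)/(cm*Δx))^2)/(cm*Δx) := by
    intro x
    rw [iimCubic_deriv, hb1def, hb2def, hb3def]
    field_simp
    ring
  have idP : ∀ x : ℝ, (up α + deriv up α*(x-α) + iteratedDeriv 2 up α*(x-α)^2/2
        + iteratedDeriv 3 up α*(x-α)^3/6) - iimCubic a₀ a₁ a₂ a₃ α (cp*Δx) x
      = b0 + b1*((x-α)/(cp*Δx)) + b2/2*((x-α)/(cp*Δx))^2 + b3/6*((x-α)/(cp*Δx))^3 := by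
    intro x
    rw [hb0p, hb1p, hb2p, hb3p]
    simp only [iimCubic]
    field_simp
    ring
  have idP' : ∀ x : ℝ, (deriv up α + iteratedDeriv 2 up α*(x-α) + iteratedDeriv 3 up α*(x-α)^2/2)
        - deriv (iimCubic a₀ a₁ a₂ a₃ α (cp*Δx)) x
      = (b1 + b2*((x-α)/(cp*Δx)) + b3/2*((x-α)/(cp*Δx))^2)/(cp*Δx) := by
    intro x
    rw [iimCubic_deriv, hb1p, hb2p, hb3p]
    field_simp
    ring
  -- nodes
  set t₁ : ℝ := (xjm - α)/(cm*Δx) with ht1def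
  set t₂ : ℝ := (xjm + Δx - α)/(cp*Δx) with ht2def
  have hgap : δ ≤ t₂ - t₁ := by
    have e : t₂ - t₁ = ((xjm + Δx - α)*cp⁻¹ + (α - xjm)*cm⁻¹)/Δx := by
      rw [ht1def, ht2def]; field_simp; ring
    have l1 : (xjm + Δx - α)*δ ≤ (xjm + Δx - α)*cp⁻¹ :=
      mul_le_mul_of_nonneg_left (min_le_right _ _) (by linarith)
    have l2 : (α - xjm)*δ ≤ (α - xjm)*cm⁻¹ :=
      mul_le_mul_of_nonneg_left (min_le_left _ _) (by linarith)
    have hnum : Δx*δ ≤ (xjm + Δx - α)*cp⁻¹ + (α - xjm)*cm⁻¹ := by linarith [l1, l2]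
    calc δ = (Δx*δ)/Δx := by field_simp
      _ ≤ ((xjm + Δx - α)*cp⁻¹ + (α - xjm)*cm⁻¹)/Δx := by gcongr
      _ = t₂ - t₁ := e.symm
  have habs_t : ∀ (x c : ℝ), 0 < c → |x - α| ≤ Δx → |(x - α)/(c*Δx)| ≤ c⁻¹ := by
    intro x c hc hx
    rw [abs_div, abs_of_pos (by positivity : (0:ℝ) < c*Δx)]
    rw [div_le_iff₀ (by positivity)]
    calc |x - α| ≤ Δx := hx
      _ = c⁻¹ * (c*Δx) := by field_simp
  have ht1K : |t₁| ≤ K := by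
    refine le_trans (habs_t xjm cm hcm ?_) (le_max_left _ _)
    rw [abs_of_nonpos (by linarith)]; linarith
  have ht2K : |t₂| ≤ K := by
    refine le_trans (habs_t (xjm + Δx) cp hcp ?_) (le_max_right _ _)
    rw [abs_of_nonneg (by linarith)]; linarith
  -- data bounds
  have hd1 : |b0 + b1*t₁ + b2/2*t₁^2 + b3/6*t₁^3| ≤ (1+cm+cp)*(M*Δx^4) := by
    rw [ht1def, ← idM xjm, i1]
    have h := tay4 um hum' hbm xjm le_rfl (by linarith)
    rw [abs_sub_comm] at h
    have hx : |xjm - α| ≤ Δx := by rw [abs_of_nonpos (by linarith)]; linarith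
    have hx4 : |xjm - α|^4 ≤ Δx^4 := pow_le_pow_left₀ (abs_nonneg _) hx 4
    have : M*|xjm-α|^4/24 ≤ M*Δx^4/24 := by gcongr <;> exact hx4
    linarith [q1, q2, hX4]
  have hd2 : |b1 + b2*t₁ + b3/2*t₁^2| ≤ (1+cm+cp)*(M*Δx^4) := by
    have h := idM' xjm
    rw [i2] at h
    have heq : b1 + b2*((xjm-α)/(cm*Δx)) + b3/2*((xjm-α)/(cm*Δx))^2
        = (cm*Δx)*((deriv um α + iteratedDeriv 2 um α*(xjm-α) + iteratedDeriv 3 um α*(xjm-α)^2/2)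
          - deriv um xjm) := by
      rw [h]; field_simp
    rw [ht1def, heq, abs_mul, abs_of_pos hsm]
    have h2 := tay3 um hdum hbm xjm le_rfl (by linarith)
    rw [abs_sub_comm] at h2
    have hx : |xjm - α| ≤ Δx := by rw [abs_of_nonpos (by linarith)]; linarith
    have hx3 : |xjm - α|^3 ≤ Δx^3 := pow_le_pow_left₀ (abs_nonneg _) hx 3
    have h3 : M*|xjm-α|^3/6 ≤ M*Δx^3/6 := by gcongr <;> exact hx3
    calc cm*Δx * |_| ≤ cm*Δx * (M*Δx^3/6) := by
          apply mul_le_mul_of_nonneg_left _ hsm.le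
          exact le_trans h2 h3
      _ ≤ (1+cm+cp)*(M*Δx^4) := by linarith [q1, q2, hX4]
  have hd3 : |b0 + b1*t₂ + b2/2*t₂^2 + b3/6*t₂^3| ≤ (1+cm+cp)*(M*Δx^4) := by
    rw [ht2def, ← idP (xjm + Δx), i3]
    have h := tay4 up hup' hbp (xjm + Δx) (by linarith) le_rfl
    rw [abs_sub_comm] at h
    have hx : |xjm + Δx - α| ≤ Δx := by rw [abs_of_nonneg (by linarith)]; linarith
    have hx4 : |xjm + Δx - α|^4 ≤ Δx^4 := pow_le_pow_left₀ (abs_nonneg _) hx 4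
    have : M*|xjm + Δx - α|^4/24 ≤ M*Δx^4/24 := by gcongr <;> exact hx4
    linarith [q1, q2, hX4]
  have hd4 : |b1 + b2*t₂ + b3/2*t₂^2| ≤ (1+cm+cp)*(M*Δx^4) := by
    have h := idP' (xjm + Δx)
    rw [i4] at h
    have heq : b1 + b2*((xjm + Δx - α)/(cp*Δx)) + b3/2*((xjm + Δx - α)/(cp*Δx))^2
        = (cp*Δx)*((deriv up α + iteratedDeriv 2 up α*(xjm + Δx - α)
          + iteratedDeriv 3 up α*(xjm + Δx - α)^2/2) - deriv up (xjm + Δx)) := by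
      rw [h]; field_simp
    rw [ht2def, heq, abs_mul, abs_of_pos hsp]
    have h2 := tay3 up hdup hbp (xjm + Δx) (by linarith) le_rfl
    rw [abs_sub_comm] at h2
    have hx : |xjm + Δx - α| ≤ Δx := by rw [abs_of_nonneg (by linarith)]; linarith
    have hx3 : |xjm + Δx - α|^3 ≤ Δx^3 := pow_le_pow_left₀ (abs_nonneg _) hx 3
    have h3 : M*|xjm + Δx - α|^3/6 ≤ M*Δx^3/6 := by gcongr <;> exact hx3
    calc cp*Δx * |_| ≤ cp*Δx * (M*Δx^3/6) := by
          apply mul_le_mul_of_nonneg_left _ hsp.le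
          exact le_trans h2 h3
      _ ≤ (1+cm+cp)*(M*Δx^4) := by linarith [q1, q2, hX4]
  have HHm := HH b0 b1 b2 b3 t₁ t₂ ((1+cm+cp)*(M*Δx^4)) hgap ht1K ht2K hd1 hd2 hd3 hd4
  -- combine constants
  have hfac : (1:ℝ) ≤ 1 + cm⁻¹ + cp⁻¹ := by
    have := inv_pos.mpr hcm; have := inv_pos.mpr hcp; linarith
  have keyC : C₀*((1+cm+cp)*(M*Δx^4)) ≤ C₀*(1+cm+cp)*(1+cm⁻¹+cp⁻¹)*(M*Δx^4) := by
    calc C₀*((1+cm+cp)*(M*Δx^4)) = (C₀*(1+cm+cp)*(M*Δx^4))*1 := by ring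
      _ ≤ (C₀*(1+cm+cp)*(M*Δx^4))*(1+cm⁻¹+cp⁻¹) :=
          mul_le_mul_of_nonneg_left hfac (by positivity)
      _ = C₀*(1+cm+cp)*(1+cm⁻¹+cp⁻¹)*(M*Δx^4) := by ring
  constructor
  · -- minus side
    intro x hx
    have hx2 : x ≤ xjm + Δx := by linarith [hx.2]
    set tx : ℝ := (x - α)/(cm*Δx) with htxdef
    have htxK : |tx| ≤ K := by
      refine le_trans (habs_t x cm hcm ?_) (le_max_left _ _)
      rw [abs_of_nonpos (by linarith [hx.2])]; linarith [hx.1]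
    obtain ⟨w1, w2⟩ := HHm tx htxK
    have htay := tay4 um hum' hbm x hx.1 hx2
    have hxa : |x - α| ≤ Δx := by
      rw [abs_of_nonpos (by linarith [hx.2])]; linarith [hx.1]
    constructor
    · have step : |um x - iimCubic a₀ a₁ a₂ a₃ α (cm*Δx) x|
          ≤ M*|x-α|^4/24 + C₀*((1+cm+cp)*(M*Δx^4)) := by
        calc |um x - iimCubic a₀ a₁ a₂ a₃ α (cm*Δx) x|
            ≤ |um x - (um α + deriv um α*(x-α) + iteratedDeriv 2 um α*(x-α)^2/2
                + iteratedDeriv 3 um α*(x-α)^3/6)|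
              + |(um α + deriv um α*(x-α) + iteratedDeriv 2 um α*(x-α)^2/2
                + iteratedDeriv 3 um α*(x-α)^3/6) - iimCubic a₀ a₁ a₂ a₃ α (cm*Δx) x| :=
              abs_sub_le _ _ _
          _ ≤ M*|x-α|^4/24 + C₀*((1+cm+cp)*(M*Δx^4)) := by
              rw [idM x]
              exact add_le_add htay w1
      have hx4 : M*|x-α|^4/24 ≤ M*Δx^4/24 := by
        gcongr <;> exact pow_le_pow_left₀ (abs_nonneg _) hxa 4
      calc |um x - iimCubic a₀ a₁ a₂ a₃ α (cm*Δx) x|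
          ≤ M*Δx^4/24 + C₀*(1+cm+cp)*(1+cm⁻¹+cp⁻¹)*(M*Δx^4) := by linarith [keyC]
        _ ≤ (1 + C₀*(1+cm+cp)*(1+cm⁻¹+cp⁻¹)) * M * Δx^4 := by linarith [hX4]
    · have htay' := tay3 um hdum hbm x hx.1 hx2
      have hdiv : |(b1 + b2*tx + b3/2*tx^2)/(cm*Δx)| ≤ (C₀*((1+cm+cp)*(M*Δx^4)))/(cm*Δx) := by
        rw [abs_div, abs_of_pos hsm]
        gcongr
      have keyC' : (C₀*((1+cm+cp)*(M*Δx^4)))/(cm*Δx)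
          ≤ C₀*(1+cm+cp)*(1+cm⁻¹+cp⁻¹)*(M*Δx^3) := by
        have e : (C₀*((1+cm+cp)*(M*Δx^4)))/(cm*Δx) = (C₀*(1+cm+cp)*(M*Δx^3))*cm⁻¹ := by
          field_simp
        rw [e]
        calc (C₀*(1+cm+cp)*(M*Δx^3))*cm⁻¹
            ≤ (C₀*(1+cm+cp)*(M*Δx^3))*(1+cm⁻¹+cp⁻¹) :=
              mul_le_mul_of_nonneg_left (by linarith [inv_pos.mpr hcp, inv_pos.mpr hcm, hfac])
                (by positivity)
          _ = C₀*(1+cm+cp)*(1+cm⁻¹+cp⁻¹)*(M*Δx^3) := by ring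
      have hx3 : M*|x-α|^3/6 ≤ M*Δx^3/6 := by
        gcongr <;> exact pow_le_pow_left₀ (abs_nonneg _) hxa 3
      calc |deriv um x - deriv (iimCubic a₀ a₁ a₂ a₃ α (cm*Δx)) x|
          ≤ |deriv um x - (deriv um α + iteratedDeriv 2 um α*(x-α)
              + iteratedDeriv 3 um α*(x-α)^2/2)|
            + |(deriv um α + iteratedDeriv 2 um α*(x-α) + iteratedDeriv 3 um α*(x-α)^2/2)
              - deriv (iimCubic a₀ a₁ a₂ a₃ α (cm*Δx)) x| := abs_sub_le _ _ _
        _ ≤ M*Δx^3/6 + C₀*(1+cm+cp)*(1+cm⁻¹+cp⁻¹)*(M*Δx^3) := by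
            rw [idM' x]
            have := le_trans hdiv keyC'
            linarith [le_trans htay' hx3]
        _ ≤ (1 + C₀*(1+cm+cp)*(1+cm⁻¹+cp⁻¹)) * M * Δx^3 := by linarith [hX3]
  · -- plus side
    intro x hx
    have hx1 : xjm ≤ x := by linarith [hx.1]
    set tx : ℝ := (x - α)/(cp*Δx) with htxdef
    have htxK : |tx| ≤ K := by
      refine le_trans (habs_t x cp hcp ?_) (le_max_right _ _)
      rw [abs_of_nonneg (by linarith [hx.1])]; linarith [hx.2]
    obtain ⟨w1, w2⟩ := HHm tx htxK
    have htay := tay4 up hup' hbp x hx1 hx.2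
    have hxa : |x - α| ≤ Δx := by
      rw [abs_of_nonneg (by linarith [hx.1])]; linarith [hx.2]
    constructor
    · have step : |up x - iimCubic a₀ a₁ a₂ a₃ α (cp*Δx) x|
          ≤ M*|x-α|^4/24 + C₀*((1+cm+cp)*(M*Δx^4)) := by
        calc |up x - iimCubic a₀ a₁ a₂ a₃ α (cp*Δx) x|
            ≤ |up x - (up α + deriv up α*(x-α) + iteratedDeriv 2 up α*(x-α)^2/2
                + iteratedDeriv 3 up α*(x-α)^3/6)|
              + |(up α + deriv up α*(x-α) + iteratedDeriv 2 up α*(x-α)^2/2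
                + iteratedDeriv 3 up α*(x-α)^3/6) - iimCubic a₀ a₁ a₂ a₃ α (cp*Δx) x| :=
              abs_sub_le _ _ _
          _ ≤ M*|x-α|^4/24 + C₀*((1+cm+cp)*(M*Δx^4)) := by
              rw [idP x]
              exact add_le_add htay w1
      have hx4 : M*|x-α|^4/24 ≤ M*Δx^4/24 := by
        gcongr <;> exact pow_le_pow_left₀ (abs_nonneg _) hxa 4
      calc |up x - iimCubic a₀ a₁ a₂ a₃ α (cp*Δx) x|
          ≤ M*Δx^4/24 + C₀*(1+cm+cp)*(1+cm⁻¹+cp⁻¹)*(M*Δx^4) := by linarith [keyC]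
        _ ≤ (1 + C₀*(1+cm+cp)*(1+cm⁻¹+cp⁻¹)) * M * Δx^4 := by linarith [hX4]
    · have htay' := tay3 up hdup hbp x hx1 hx.2
      have hdiv : |(b1 + b2*tx + b3/2*tx^2)/(cp*Δx)| ≤ (C₀*((1+cm+cp)*(M*Δx^4)))/(cp*Δx) := by
        rw [abs_div, abs_of_pos hsp]
        gcongr
      have keyC' : (C₀*((1+cm+cp)*(M*Δx^4)))/(cp*Δx)
          ≤ C₀*(1+cm+cp)*(1+cm⁻¹+cp⁻¹)*(M*Δx^3) := by
        have e : (C₀*((1+cm+cp)*(M*Δx^4)))/(cp*Δx) = (C₀*(1+cm+cp)*(M*Δx^3))*cp⁻¹ := by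
          field_simp
        rw [e]
        calc (C₀*(1+cm+cp)*(M*Δx^3))*cp⁻¹
            ≤ (C₀*(1+cm+cp)*(M*Δx^3))*(1+cm⁻¹+cp⁻¹) :=
              mul_le_mul_of_nonneg_left (by linarith [inv_pos.mpr hcp, inv_pos.mpr hcm])
                (by positivity)
          _ = C₀*(1+cm+cp)*(1+cm⁻¹+cp⁻¹)*(M*Δx^3) := by ring
      have hx3 : M*|x-α|^3/6 ≤ M*Δx^3/6 := by
        gcongr <;> exact pow_le_pow_left₀ (abs_nonneg _) hxa 3
      calc |deriv up x - deriv (iimCubic a₀ a₁ a₂ a₃ α (cp*Δx)) x|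
          ≤ |deriv up x - (deriv up α + iteratedDeriv 2 up α*(x-α)
              + iteratedDeriv 3 up α*(x-α)^2/2)|
            + |(deriv up α + iteratedDeriv 2 up α*(x-α) + iteratedDeriv 3 up α*(x-α)^2/2)
              - deriv (iimCubic a₀ a₁ a₂ a₃ α (cp*Δx)) x| := abs_sub_le _ _ _
        _ ≤ M*Δx^3/6 + C₀*(1+cm+cp)*(1+cm⁻¹+cp⁻¹)*(M*Δx^3) := by
            rw [idP' x]
            have := le_trans hdiv keyC'
            linarith [le_trans htay' hx3]
        _ ≤ (1 + C₀*(1+cm+cp)*(1+cm⁻¹+cp⁻¹)) * M * Δx^3 := by linarith [hX3]
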